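/- arXiv:2412.09792 — 2 statements merged into one kernel-verified Lean document; each statement's English description precedes it below -/
import Mathlib

section
/- Let X_1, …, X_H be independent, identically distributed random variables, each supported on (0, 1) with density x ↦ α x^{α−1} for some α > 0 (the Beta(α, 1) distribution). Then for every ε ∈ (0, 1), P(∏_{h=1}^H X_h > ε) ≤ (α log(1/ε))^H / H!. -/
open MeasureTheory ProbabilityTheory Real

open Set in


noncomputable def betaDens (α : ℝ) : ℝ → ENNReal := fun x =>
  ENNReal.ofReal (if x ∈ Set.Ioo (0 : ℝ) 1 then α * x ^ (α - 1) else 0)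

lemma betaDens_measurable (α : ℝ) : Measurable (betaDens α) := by
  apply ENNReal.measurable_ofReal.comp
  exact Measurable.ite measurableSet_Ioo
    (measurable_const.mul (measurable_id.pow_const _)) measurable_const

lemma betaDens_null (α : ℝ) :
    (volume.withDensity (betaDens α)) (Set.Ioo (0:ℝ) 1)ᶜ = 0 := by
  rw [withDensity_apply _ measurableSet_Ioo.compl]
  have h0 : ∀ x ∈ (Set.Ioo (0:ℝ) 1)ᶜ, betaDens α x = 0 := fun x hx => by
    simp only [betaDens, if_neg hx, ENNReal.ofReal_zero]
  rw [setLIntegral_congr_fun measurableSet_Ioo.compl (show Set.EqOn (betaDens α) (fun _ => (0:ENNReal)) (Set.Ioo (0:ℝ) 1)ᶜ from h0)]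
  simp

lemma betaDens_ae (α : ℝ) (ν : Measure ℝ) (hν : ν = volume.withDensity (betaDens α)) :
    ∀ᵐ a ∂ν, a ∈ Set.Ioo (0:ℝ) 1 := by
  rw [ae_iff]
  convert hν ▸ betaDens_null α using 2
  rfl

lemma pi_ae_mem (ν : Measure ℝ) [IsProbabilityMeasure ν]
    (hnull : ν (Set.Ioo (0:ℝ) 1)ᶜ = 0) (n : ℕ) :
    ∀ᵐ y ∂(Measure.pi fun _ : Fin n => ν), ∀ j, y j ∈ Set.Ioo (0:ℝ) 1 := by
  have h1 : ν (Set.Ioo (0:ℝ) 1) = 1 := (prob_compl_eq_zero_iff measurableSet_Ioo).mp hnull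
  have h2 : (Measure.pi fun _ : Fin n => ν) (Set.pi Set.univ fun _ => Set.Ioo (0:ℝ) 1) = 1 := by
    rw [Measure.pi_pi]; simp [h1]
  have h3 := (prob_compl_eq_zero_iff (MeasurableSet.univ_pi fun _ => measurableSet_Ioo)).mpr h2
  rw [ae_iff]
  convert h3 using 2
  ext y; simp [Set.mem_pi]

lemma log_pow_integral (n : ℕ) {ε : ℝ} (hε : 0 < ε) (hε1 : ε < 1) :
    ∫ x in ε..1, (Real.log x - Real.log ε) ^ n / x =
      (-Real.log ε) ^ (n + 1) / (n + 1) := by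
  have hne : ((n : ℝ) + 1) ≠ 0 := by positivity
  have key : ∀ x ∈ Set.uIcc ε 1, HasDerivAt
      (fun x => (Real.log x - Real.log ε) ^ (n + 1) / (n + 1))
      ((Real.log x - Real.log ε) ^ n / x) x := by
    intro x hx
    rw [Set.uIcc_of_le hε1.le] at hx
    have hx0 : x ≠ 0 := (lt_of_lt_of_le hε hx.1).ne'
    have h1 : HasDerivAt (fun x => Real.log x - Real.log ε) x⁻¹ x :=
      (Real.hasDerivAt_log hx0).sub_const _
    have h2 := (h1.pow (n + 1)).div_const ((n : ℝ) + 1)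
    have e : ((↑(n + 1) : ℝ) * (Real.log x - Real.log ε) ^ (n + 1 - 1) * x⁻¹ / ((n : ℝ) + 1))
        = (Real.log x - Real.log ε) ^ n / x := by
      rw [Nat.add_sub_cancel]; push_cast; field_simp
    rw [e] at h2
    exact h2
  have hint : IntervalIntegrable (fun x => (Real.log x - Real.log ε) ^ n / x)
      volume ε 1 := by
    apply ContinuousOn.intervalIntegrable
    rw [Set.uIcc_of_le hε1.le]
    have hx0 : ∀ x ∈ Set.Icc ε 1, x ≠ 0 := fun x hx => (lt_of_lt_of_le hε hx.1).ne'
    exact (((Real.continuousOn_log.mono (fun x hx => hx0 x hx)).sub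
      continuousOn_const).pow n).div continuousOn_id hx0
  rw [intervalIntegral.integral_eq_sub_of_hasDerivAt key hint]
  simp [Real.log_one]

lemma beta_pi_tail (α : ℝ) (hα : 0 < α)
    [hpr : IsProbabilityMeasure (volume.withDensity (betaDens α))] :
    ∀ (n : ℕ) (ε : ℝ), 0 < ε → ε < 1 →
      Measure.pi (fun _ : Fin n => volume.withDensity (betaDens α)) {x | ε < ∏ h, x h} ≤
        ENNReal.ofReal ((α * Real.log (1 / ε)) ^ n / (Nat.factorial n)) := by
  intro n
  induction n with
  | zero =>
    intro ε hε hε1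
    calc Measure.pi (fun _ : Fin 0 => volume.withDensity (betaDens α)) {x | ε < ∏ h, x h}
        ≤ 1 := prob_le_one
      _ = ENNReal.ofReal ((α * Real.log (1 / ε)) ^ 0 / (Nat.factorial 0)) := by
          simp [Nat.factorial]
  | succ n IH =>
    intro ε hε hε1
    set ν := volume.withDensity (betaDens α) with hν
    set pn := Measure.pi fun _ : Fin n => ν with hpn
    -- split off the first coordinate
    set T : Set (ℝ × (Fin n → ℝ)) := {p | ε < p.1 * ∏ j, p.2 j} with hT
    have hTm : MeasurableSet T := measurableSet_lt measurable_const
      (measurable_fst.mul (Finset.measurable_prod _ fun j _ =>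
        (measurable_pi_apply j).comp measurable_snd))
    have hstep : Measure.pi (fun _ : Fin (n+1) => ν) {x | ε < ∏ h, x h} = (ν.prod pn) T := by
      rw [← (measurePreserving_piFinSuccAbove (fun _ : Fin (n+1) => ν) 0).measure_preimage
        hTm.nullMeasurableSet]
      congr 1
      ext x
      simp only [Set.mem_setOf_eq, Set.mem_preimage, MeasurableEquiv.piFinSuccAbove,
        MeasurableEquiv.coe_mk, Equiv.coe_fn_mk, hT, Fin.insertNthEquiv,
        Equiv.coe_fn_symm_mk, Fin.removeNth]
      rw [Fin.prod_univ_succAbove (fun h => x h) 0]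
    -- a.e. bound on sections
    have hprodae : ∀ᵐ y ∂pn, 0 < (∏ j, y j) ∧ (∏ j, y j) ≤ 1 := by
      filter_upwards [pi_ae_mem ν (betaDens_null α) n] with y hy
      exact ⟨Finset.prod_pos fun j _ => (hy j).1,
        Finset.prod_le_one (fun j _ => (hy j).1.le) (fun j _ => (hy j).2.le)⟩
    have hprodnull : pn {y | ¬ (0 < (∏ j, y j) ∧ (∏ j, y j) ≤ 1)} = 0 := by
      rw [← ae_iff]; exact hprodae
    set g : ℝ → ENNReal := fun a => if ε < a
      then ENNReal.ofReal ((α * Real.log (a / ε)) ^ n / (Nat.factorial n)) else 0 with hg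
    have hgm : Measurable g := by
      apply Measurable.ite measurableSet_Ioi _ measurable_const
      exact ENNReal.measurable_ofReal.comp
        (((measurable_const.mul (Real.measurable_log.comp
          (measurable_id.div_const ε))).pow_const n).div_const _)
    have hbound : ∀ᵐ a ∂ν, pn (Prod.mk a ⁻¹' T) ≤ g a := by
      filter_upwards [betaDens_ae α ν hν] with a ha
      by_cases hc : ε < a
      · rw [hg]; simp only [if_pos hc]
        have ha0 : 0 < a := lt_trans hε hc
        have hset : Prod.mk a ⁻¹' T = {y | ε / a < ∏ j, y j} := by
          ext y
          simp only [Set.mem_preimage, hT, Set.mem_setOf_eq, div_lt_iff₀ ha0]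
          rw [mul_comm]
        rw [hset]
        have := IH (ε / a) (div_pos hε ha0) ((div_lt_one ha0).mpr hc)
        rwa [one_div_div] at this
      · rw [hg]; simp only [if_neg hc]
        refine le_of_eq (measure_mono_null ?_ hprodnull)
        intro y hy
        simp only [Set.mem_preimage, hT, Set.mem_setOf_eq] at hy
        simp only [Set.mem_setOf_eq]
        intro hcon
        push_neg at hc
        nlinarith [mul_le_mul_of_nonneg_right hc hcon.1.le,
          mul_le_mul_of_nonneg_left hcon.2 hε.le]
    -- the section-integral bound
    have h1 : (ν.prod pn) T ≤ ∫⁻ a, g a ∂ν := by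
      rw [Measure.prod_apply hTm]
      exact lintegral_mono_ae hbound
    -- pass to the Lebesgue density
    have h2 : ∫⁻ a, g a ∂ν = ∫⁻ a in Set.Ioo ε 1,
        ENNReal.ofReal (α * a ^ (α - 1) *
          ((α * Real.log (a / ε)) ^ n / (Nat.factorial n))) ∂volume := by
      rw [hν, lintegral_withDensity_eq_lintegral_mul volume (betaDens_measurable α) hgm]
      rw [← lintegral_indicator measurableSet_Ioo]
      congr 1
      funext a
      by_cases hmem : a ∈ Set.Ioo ε 1
      · have hm01 : a ∈ Set.Ioo (0:ℝ) 1 := ⟨lt_trans hε hmem.1, hmem.2⟩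
        rw [Set.indicator_of_mem hmem]
        simp only [Pi.mul_apply, betaDens, if_pos hm01, hg, if_pos hmem.1]
        rw [← ENNReal.ofReal_mul (mul_nonneg hα.le (Real.rpow_nonneg hm01.1.le _))]
      · rw [Set.indicator_of_notMem hmem]
        simp only [Pi.mul_apply]
        by_cases hm01 : a ∈ Set.Ioo (0:ℝ) 1
        · have hc : ¬ ε < a := fun h => hmem ⟨h, hm01.2⟩
          simp [hg, if_neg hc]
        · have hz : betaDens α a = 0 := by simp only [betaDens, if_neg hm01, ENNReal.ofReal_zero]
          rw [hz, zero_mul]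
    -- pointwise bound on the density
    set c : ℝ := α ^ (n + 1) / (Nat.factorial n) with hc
    have hcpos : 0 < c := by positivity
    have h3 : ∫⁻ a in Set.Ioo ε 1,
        ENNReal.ofReal (α * a ^ (α - 1) *
          ((α * Real.log (a / ε)) ^ n / (Nat.factorial n))) ∂volume ≤
        ∫⁻ a in Set.Ioo ε 1,
          ENNReal.ofReal (c * ((Real.log a - Real.log ε) ^ n / a)) ∂volume := by
      apply setLIntegral_mono
      · exact ENNReal.measurable_ofReal.comp ((measurable_const.mul
          (((Real.measurable_log.sub measurable_const).pow_const n).div measurable_id)))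
      · intro a ha
        apply ENNReal.ofReal_le_ofReal
        have ha0 : (0:ℝ) < a := hε.trans ha.1
        have ht : 0 ≤ Real.log a - Real.log ε :=
          sub_nonneg.mpr (Real.log_le_log hε ha.1.le)
        have hr : a ^ (α - 1) ≤ 1 / a := by
          rw [Real.rpow_sub ha0, Real.rpow_one]
          gcongr
          exact Real.rpow_le_one ha0.le ha.2.le hα.le
        rw [Real.log_div ha0.ne' hε.ne']
        calc α * a ^ (α - 1) * ((α * (Real.log a - Real.log ε)) ^ n / (Nat.factorial n))
            = (α ^ (n+1) * (Real.log a - Real.log ε) ^ n / (Nat.factorial n)) * a ^ (α - 1) := by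
              rw [mul_pow]; ring
          _ ≤ (α ^ (n+1) * (Real.log a - Real.log ε) ^ n / (Nat.factorial n)) * (1 / a) := by
              apply mul_le_mul_of_nonneg_left hr (by positivity)
          _ = c * ((Real.log a - Real.log ε) ^ n / a) := by rw [hc]; ring
    -- compute the integral
    have hIvInt : IntervalIntegrable (fun a => c * ((Real.log a - Real.log ε) ^ n / a))
        volume ε 1 := by
      apply ContinuousOn.intervalIntegrable
      rw [Set.uIcc_of_le hε1.le]
      have hx0 : ∀ x ∈ Set.Icc ε 1, x ≠ 0 := fun x hx => (lt_of_lt_of_le hε hx.1).ne'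
      exact continuousOn_const.mul ((((Real.continuousOn_log.mono
        (fun x hx => hx0 x hx)).sub continuousOn_const).pow n).div continuousOn_id hx0)
    have h4 : ∫⁻ a in Set.Ioo ε 1,
        ENNReal.ofReal (c * ((Real.log a - Real.log ε) ^ n / a)) ∂volume =
        ENNReal.ofReal (∫ a in Set.Ioo ε 1, c * ((Real.log a - Real.log ε) ^ n / a)) := by
      rw [← ofReal_integral_eq_lintegral_ofReal]
      · exact (hIvInt.1.mono_set Set.Ioo_subset_Ioc_self)
      · rw [Filter.EventuallyLE, ae_restrict_iff' measurableSet_Ioo]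
        apply Filter.Eventually.of_forall
        intro a ha
        have ha0 : (0:ℝ) < a := hε.trans ha.1
        have ht : 0 ≤ Real.log a - Real.log ε :=
          sub_nonneg.mpr (Real.log_le_log hε ha.1.le)
        exact mul_nonneg hcpos.le (div_nonneg (pow_nonneg ht n) ha0.le)
    have h5 : ∫ a in Set.Ioo ε 1, c * ((Real.log a - Real.log ε) ^ n / a) =
        c * ((-Real.log ε) ^ (n + 1) / (n + 1)) := by
      rw [← integral_Ioc_eq_integral_Ioo, ← intervalIntegral.integral_of_le hε1.le,
        intervalIntegral.integral_const_mul, log_pow_integral n hε hε1]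
    have h6 : c * ((-Real.log ε) ^ (n + 1) / (n + 1)) =
        (α * Real.log (1 / ε)) ^ (n + 1) / (Nat.factorial (n + 1)) := by
      rw [one_div, Real.log_inv, hc, mul_pow, Nat.factorial_succ, div_mul_div_comm]
      congr 1
      push_cast
      ring
    calc Measure.pi (fun _ : Fin (n+1) => ν) {x | ε < ∏ h, x h}
        = (ν.prod pn) T := hstep
      _ ≤ ∫⁻ a, g a ∂ν := h1
      _ = _ := h2
      _ ≤ _ := h3
      _ = _ := h4
      _ = ENNReal.ofReal ((α * Real.log (1 / ε)) ^ (n+1) / (Nat.factorial (n+1))) := by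
          rw [h5, h6]

/-- Tail bound for a product of `H` i.i.d. Beta(α, 1) random variables
(density `α x^(α-1)` on `(0,1)`): `P(∏ X_h > ε) ≤ (α log(1/ε))^H / H!`. -/
theorem prod_iid_beta_tail
    {Ω : Type*} [MeasurableSpace Ω] (μ : Measure Ω) [IsProbabilityMeasure μ]
    (H : ℕ) (hH : 1 ≤ H) (α : ℝ) (hα : 0 < α)
    (X : Fin H → Ω → ℝ) (hmeas : ∀ h, Measurable (X h))
    (hsupp : ∀ h, ∀ᵐ ω ∂μ, X h ω ∈ Set.Ioo (0 : ℝ) 1)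
    (hlaw : ∀ h, Measure.map (X h) μ =
      volume.withDensity (fun x =>
        ENNReal.ofReal (if x ∈ Set.Ioo (0 : ℝ) 1 then α * x ^ (α - 1) else 0)))
    (hindep : iIndepFun X μ)
    (ε : ℝ) (hε : 0 < ε) (hε1 : ε < 1) :
    μ {ω | ε < ∏ h, X h ω} ≤
      ENNReal.ofReal ((α * Real.log (1 / ε)) ^ H / (Nat.factorial H)) := by
  have hprob : IsProbabilityMeasure (volume.withDensity (betaDens α)) := by
    have heq : volume.withDensity (betaDens α) = Measure.map (X ⟨0, hH⟩) μ := (hlaw _).symm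
    rw [heq]
    exact Measure.isProbabilityMeasure_map (hmeas _).aemeasurable
  haveI := hprob
  set T : Ω → (Fin H → ℝ) := fun ω h => X h ω with hTdef
  have hTm : Measurable T := measurable_pi_iff.mpr hmeas
  have hmap : Measure.map T μ = Measure.pi (fun _ : Fin H => volume.withDensity (betaDens α)) := by
    refine (Measure.pi_eq fun s hs => ?_).symm
    rw [Measure.map_apply hTm (MeasurableSet.univ_pi hs)]
    have hpre : T ⁻¹' (Set.pi Set.univ s) = ⋂ h, X h ⁻¹' s h := by
      ext ω; simp [Set.mem_pi, hTdef]
    rw [hpre, hindep.meas_iInter (fun i => ⟨s i, hs i, rfl⟩)]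
    refine Finset.prod_congr rfl fun h _ => ?_
    rw [← Measure.map_apply (hmeas h) (hs h), hlaw h]
    rfl
  have hSm : MeasurableSet {x : Fin H → ℝ | ε < ∏ h, x h} :=
    measurableSet_lt measurable_const (Finset.measurable_prod _ fun h _ => measurable_pi_apply h)
  have hset : {ω | ε < ∏ h, X h ω} = T ⁻¹' {x | ε < ∏ h, x h} := rfl
  rw [hset, ← Measure.map_apply hTm hSm, hmap]
  exact beta_pi_tail α hα H ε hε hε1
end

section
/- Let L ≥ 1, let μ_1, μ_2 ∈ ℝ^L, and let Σ be a symmetric positive definite L×L real matrix. Writing φ_Σ(y) = (2π)^{−L/2} det(Σ)^{−1/2} exp(−yᵀ Σ^{−1} y / 2) for the centered L-variate normal density with covariance Σ, one has ∫_{ℝ^L} |φ_Σ(y − μ_1) − φ_Σ(y − μ_2)| dy ≤ √(2/π) · ((μ_1 − μ_2)ᵀ Σ^{−1} (μ_1 − μ_2))^{1/2}. -/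
open MeasureTheory Real Matrix Set


noncomputable def gphi (t : ℝ) : ℝ := Real.exp (-(t*t)/2)

lemma gphi_integrable : Integrable gphi := by
  have h := integrable_exp_neg_mul_sq (by norm_num : (0:ℝ) < 1/2)
  convert h using 2 with t
  unfold gphi
  ring_nf

lemma gphi_nonneg (t : ℝ) : 0 ≤ gphi t := (Real.exp_pos _).le

lemma gphi_le_one (t : ℝ) : gphi t ≤ 1 := by
  unfold gphi
  rw [← Real.exp_zero]
  apply Real.exp_le_exp.2
  nlinarith [sq_nonneg t]

lemma gphi_shift_integral (c d : ℝ) :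
    ∫ t in Ici c, gphi (t + d) = ∫ t in Ici (c + d), gphi t := by
  have h1 : ∀ t : ℝ, (Ici c).indicator (fun t => gphi (t + d)) t
      = (Ici (c + d)).indicator gphi (t + d) := by
    intro t
    by_cases h : t ∈ Ici c
    · rw [indicator_of_mem h, indicator_of_mem (by simpa [mem_Ici] using add_le_add_right h d)]
    · rw [indicator_of_notMem h, indicator_of_notMem (by simp only [mem_Ici] at h ⊢; intro hc; exact h (by linarith))]
  rw [← integral_indicator measurableSet_Ici, ← integral_indicator measurableSet_Ici]
  simp_rw [h1]
  exact integral_add_right_eq_self ((Ici (c+d)).indicator gphi) d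

lemma gphi_shift_integral_Iio (c d : ℝ) :
    ∫ t in Iio c, gphi (t + d) = ∫ t in Iio (c + d), gphi t := by
  have h1 : ∀ t : ℝ, (Iio c).indicator (fun t => gphi (t + d)) t
      = (Iio (c + d)).indicator gphi (t + d) := by
    intro t
    by_cases h : t ∈ Iio c
    · rw [indicator_of_mem h, indicator_of_mem (by simp only [mem_Iio] at h ⊢; linarith)]
    · rw [indicator_of_notMem h, indicator_of_notMem (by simp only [mem_Iio] at h ⊢; linarith)]
  rw [← integral_indicator measurableSet_Iio, ← integral_indicator measurableSet_Iio]
  simp_rw [h1]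
  exact integral_add_right_eq_self ((Iio (c+d)).indicator gphi) d

lemma gphi_Ico_bound (a : ℝ) (ha : 0 ≤ a) : ∫ t in Ico (-a) a, gphi t ≤ 2 * a := by
  have h1 : ∫ t in Ico (-a) a, gphi t ≤ ∫ t in Ico (-a) a, (1:ℝ) := by
    apply setIntegral_mono_on gphi_integrable.integrableOn
      (integrableOn_const (by rw [Real.volume_Ico]; exact ENNReal.ofReal_ne_top))
      measurableSet_Ico
    intro t _
    exact gphi_le_one t
  have h2 : ∫ t in Ico (-a) a, (1:ℝ) = 2 * a := by
    simp [Real.volume_Ico]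
    rw [max_eq_left (by linarith)]
    ring
  linarith

lemma oneD_bound (d : ℝ) (hd : 0 ≤ d) :
    ∫ t : ℝ, |gphi t - gphi (t + d)| ≤ 2 * d := by
  set a := d / 2 with ha
  have ha0 : 0 ≤ a := by positivity
  have hg : Integrable (fun t => gphi (t + d)) := gphi_integrable.comp_add_right d
  have hsub : Integrable (fun t => gphi t - gphi (t + d)) := gphi_integrable.sub hg
  have habs : Integrable (fun t => |gphi t - gphi (t + d)|) := hsub.abs
  -- sign: for t ≥ -a, gphi t ≥ gphi (t+d); for t ≤ -a, reverse
  have hsign1 : ∀ t ∈ Ici (-a), |gphi t - gphi (t + d)| = gphi t - gphi (t + d) := by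
    intro t ht
    rw [abs_of_nonneg]
    simp only [mem_Ici] at ht
    have : (t + d) * (t + d) ≥ t * t := by nlinarith
    unfold gphi
    have := Real.exp_le_exp.2 (by linarith : -((t+d)*(t+d))/2 ≤ -(t*t)/2)
    linarith
  have hsign2 : ∀ t ∈ Iio (-a), |gphi t - gphi (t + d)| = gphi (t + d) - gphi t := by
    intro t ht
    rw [abs_of_nonpos]
    · ring
    simp only [mem_Iio] at ht
    have : (t + d) * (t + d) ≤ t * t := by nlinarith
    unfold gphi
    have := Real.exp_le_exp.2 (by linarith : -(t*t)/2 ≤ -((t+d)*(t+d))/2)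
    linarith
  rw [← intervalIntegral.integral_Iio_add_Ici (b := -a) habs.integrableOn habs.integrableOn]
  have e1 : ∫ t in Ici (-a), |gphi t - gphi (t + d)|
      = (∫ t in Ici (-a), gphi t) - ∫ t in Ici a, gphi t := by
    rw [setIntegral_congr_fun measurableSet_Ici hsign1,
      integral_sub gphi_integrable.integrableOn hg.integrableOn, gphi_shift_integral]
    congr 1
    rw [show -a + d = a by rw [ha]; ring]
  have e2 : ∫ t in Iio (-a), |gphi t - gphi (t + d)|
      = (∫ t in Iio a, gphi t) - ∫ t in Iio (-a), gphi t := by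
    rw [setIntegral_congr_fun measurableSet_Iio hsign2,
      integral_sub hg.integrableOn gphi_integrable.integrableOn, gphi_shift_integral_Iio]
    congr 2
    rw [show -a + d = a by rw [ha]; ring]
  have split1 : (∫ t in Ici (-a), gphi t) = (∫ t in Ico (-a) a, gphi t) + ∫ t in Ici a, gphi t := by
    rw [← setIntegral_union (by rw [Set.disjoint_left]; rintro x ⟨_, hx⟩ hx2; exact absurd (mem_Ici.mp hx2) (not_le.2 hx)) measurableSet_Ici
      gphi_integrable.integrableOn gphi_integrable.integrableOn,
      Ico_union_Ici_eq_Ici (by linarith : -a ≤ a)]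
  have split2 : (∫ t in Iio a, gphi t) = (∫ t in Iio (-a), gphi t) + ∫ t in Ico (-a) a, gphi t := by
    rw [← setIntegral_union (by rw [Set.disjoint_left]; rintro x hx ⟨hx2, _⟩; exact absurd (mem_Iio.mp hx) (not_lt.2 hx2)) measurableSet_Ico
      gphi_integrable.integrableOn gphi_integrable.integrableOn,
      Iio_union_Ico_eq_Iio (by linarith : -a ≤ a)]
  have hb := gphi_Ico_bound a ha0
  have : (2:ℝ) * a + 2 * a = 2 * d := by rw [ha]; ring
  linarith [e1, e2]

variable {L : ℕ}

lemma householder (i₀ : Fin L) (u : Fin L → ℝ) (hu : u ⬝ᵥ u = 1) :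
    ∃ O : Matrix (Fin L) (Fin L) ℝ, O * O = 1 ∧ Oᵀ = O ∧ O *ᵥ (Pi.single i₀ 1) = u := by
  classical
  set e : Fin L → ℝ := Pi.single i₀ 1 with he
  by_cases h : u = e
  · exact ⟨1, by simp, by simp, by simp [h]⟩
  · set w : Fin L → ℝ := u - e with hw
    have hw0 : w ≠ 0 := sub_ne_zero.2 h
    have hww : 0 < w ⬝ᵥ w := by
      rcases Function.ne_iff.1 hw0 with ⟨j, hj⟩
      have hj' : w j ≠ 0 := hj
      apply Finset.sum_pos' (fun i _ => mul_self_nonneg _)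
      exact ⟨j, Finset.mem_univ j, mul_self_pos.2 hj'⟩
    set c : ℝ := 2 / (w ⬝ᵥ w) with hc
    set M : Matrix (Fin L) (Fin L) ℝ := vecMulVec w w with hM
    set O : Matrix (Fin L) (Fin L) ℝ := 1 - c • M with hO
    have hMsq : M * M = (w ⬝ᵥ w) • M := by
      ext i j
      simp [hM, mul_apply, vecMulVec_apply, dotProduct, Finset.mul_sum, Finset.sum_mul]
      congr 1; ext k; ring
    have e1 : O * O = 1 - (c + c) • M + (c * c) • (M * M) := by
      rw [hO]
      noncomm_ring
      match_scalars <;> (try simp only [nsmul_eq_mul, zsmul_eq_mul]) <;> (push_cast; try ring)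
    have hOsq : O * O = 1 := by
      rw [e1, hMsq, smul_smul]
      have : c * c * (w ⬝ᵥ w) = c + c := by
        rw [hc]; field_simp; ring
      rw [this]
      module
    have hOt : Oᵀ = O := by
      rw [hO, transpose_sub, transpose_one, transpose_smul]
      congr 1
      ext i j
      simp [hM, vecMulVec_apply, mul_comm]
    have he0 : w ⬝ᵥ e = u i₀ - 1 := by
      simp [hw, he, dotProduct, Pi.single_apply, sub_mul]
    have huu : w ⬝ᵥ w = 2 * (1 - u i₀) := by
      have h1 : w ⬝ᵥ w = u ⬝ᵥ u - u ⬝ᵥ e - e ⬝ᵥ u + e ⬝ᵥ e := by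
        simp [hw, dotProduct, sub_mul, mul_sub, Finset.sum_sub_distrib, Finset.sum_add_distrib]
        ring
      have h2 : u ⬝ᵥ e = u i₀ := by simp [he, dotProduct, Pi.single_apply]
      have h3 : e ⬝ᵥ u = u i₀ := by simp [he, dotProduct, Pi.single_apply]
      have h4 : e ⬝ᵥ e = 1 := by simp [he, dotProduct, Pi.single_apply]
      rw [h1, h2, h3, h4, hu]; ring
    have hOe : O *ᵥ e = u := by
      rw [hO, sub_mulVec, one_mulVec]
      have hme : M *ᵥ e = (w ⬝ᵥ e) • w := by
        ext i
        simp only [hM, mulVec, dotProduct, vecMulVec_apply, Pi.smul_apply, smul_eq_mul,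
          Finset.sum_mul]
        exact Finset.sum_congr rfl fun k _ => by ring
      rw [smul_mulVec, hme, he0, smul_smul]
      have hne : u i₀ ≠ 1 := by
        intro h1
        rw [huu, h1] at hww
        simp at hww
      have hci : c * (u i₀ - 1) = -1 := by
        rw [hc, huu]
        have hden : (1 : ℝ) - u i₀ ≠ 0 := sub_ne_zero.2 (Ne.symm hne)
        field_simp
        ring
      rw [hci]
      ext i
      simp only [hw, Pi.sub_apply, Pi.smul_apply, smul_eq_mul]
      ring
    exact ⟨O, hOsq, hOt, hOe⟩

/-- The L1 distance between two `L`-variate normal densities with common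
covariance `Σ` and means `μ₁, μ₂` is at most
`√(2/π) · ((μ₁−μ₂)ᵀ Σ⁻¹ (μ₁−μ₂))^{1/2}`. -/
theorem gaussian_L1_distance_bound (L : ℕ) (hL : 1 ≤ L)
    (μ₁ μ₂ : Fin L → ℝ) (S : Matrix (Fin L) (Fin L) ℝ) (hS : S.PosDef) :
    (∫ y : Fin L → ℝ,
        |(fun x : Fin L → ℝ =>
            (2 * π) ^ (-(L : ℝ) / 2) * S.det ^ (-(1 / 2 : ℝ)) *
              Real.exp (-(x ⬝ᵥ (S⁻¹ *ᵥ x)) / 2)) (y - μ₁) -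
          (fun x : Fin L → ℝ =>
            (2 * π) ^ (-(L : ℝ) / 2) * S.det ^ (-(1 / 2 : ℝ)) *
              Real.exp (-(x ⬝ᵥ (S⁻¹ *ᵥ x)) / 2)) (y - μ₂)|) ≤
      Real.sqrt (2 / π) * Real.sqrt ((μ₁ - μ₂) ⬝ᵥ (S⁻¹ *ᵥ (μ₁ - μ₂))) := by

  classical
  set T : Matrix (Fin L) (Fin L) ℝ := S⁻¹ with hTdef
  have hT : T.PosDef := hS.inv
  set c : ℝ := (2 * π) ^ (-(L : ℝ) / 2) * S.det ^ (-(1 / 2 : ℝ)) with hcdef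
  have hdetS : 0 < S.det := hS.det_pos
  have hc0 : 0 ≤ c := mul_nonneg (Real.rpow_nonneg (by positivity) _)
    (Real.rpow_nonneg hdetS.le _)
  set δ : Fin L → ℝ := μ₁ - μ₂ with hδdef
  by_cases hδ0 : δ = 0
  · have hμ : μ₁ = μ₂ := by
      have := sub_eq_zero.1 hδ0
      exact this
    simp only [hμ, sub_self, abs_zero, integral_zero]
    positivity
  · -- main case
    have hdd : 0 < δ ⬝ᵥ (T *ᵥ δ) := by
      have := hT.re_dotProduct_pos (x := δ) hδ0
      simpa using this
    set d : ℝ := Real.sqrt (δ ⬝ᵥ (T *ᵥ δ)) with hddef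
    have hd0 : 0 < d := Real.sqrt_pos.2 hdd
    have hdsq : d * d = δ ⬝ᵥ (T *ᵥ δ) := Real.mul_self_sqrt hdd.le
    set i₀ : Fin L := ⟨0, hL⟩ with hi₀def
    -- square root of T
    set R : Matrix (Fin L) (Fin L) ℝ := (open scoped MatrixOrder in CFC.sqrt T) with hRdef
    have hRR : R * R = T := (open scoped MatrixOrder in CFC.sqrt_mul_sqrt_self T hT.posSemidef.nonneg)
    have hRsym : Rᵀ = R := by
      have h := (open scoped MatrixOrder in (CFC.sqrt_nonneg T).posSemidef).1.eq
      rwa [conjTranspose_eq_transpose_of_trivial] at h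
    have hTt : Tᵀ = T := by
      have h := hT.1.eq
      rwa [conjTranspose_eq_transpose_of_trivial] at h
    have hdetT : 0 < T.det := hT.det_pos
    have hRdet : R.det ≠ 0 := by
      intro h
      rw [← hRR, det_mul, h, mul_zero] at hdetT
      exact lt_irrefl _ hdetT
    -- quadratic identity for R
    have hq : ∀ x y : Fin L → ℝ, (R *ᵥ x) ⬝ᵥ (R *ᵥ y) = x ⬝ᵥ (T *ᵥ y) := by
      intro x y
      have hvm : ∀ (M : Matrix (Fin L) (Fin L) ℝ), Mᵀ = M → ∀ z : Fin L → ℝ,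
          z ᵥ* M = M *ᵥ z := by
        intro M hM z
        conv_lhs => rw [← hM]
        rw [vecMul_transpose]
      rw [dotProduct_mulVec _ R y, hvm R hRsym, mulVec_mulVec, hRR,
        dotProduct_mulVec x T y, hvm T hTt]
    set v : Fin L → ℝ := R *ᵥ δ with hvdef
    have hvv : v ⬝ᵥ v = δ ⬝ᵥ (T *ᵥ δ) := hq δ δ
    set u : Fin L → ℝ := d⁻¹ • v with hudef
    have huu : u ⬝ᵥ u = 1 := by
      rw [hudef, smul_dotProduct, dotProduct_smul, hvv, smul_eq_mul, smul_eq_mul, ← hdsq]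
      field_simp
    obtain ⟨O, hO2, hOt, hOe⟩ := householder i₀ u huu
    set B : Matrix (Fin L) (Fin L) ℝ := R⁻¹ * O with hBdef
    have hBt : Bᵀ = O * R⁻¹ := by
      rw [hBdef, transpose_mul, transpose_nonsing_inv, hRsym, hOt]
    have hBTB : Bᵀ * T * B = 1 := by
      rw [hBt, hBdef, ← hRR]
      simp only [mul_assoc]
      rw [← mul_assoc R R⁻¹ O, mul_nonsing_inv _ (isUnit_iff_ne_zero.2 hRdet), one_mul,
        ← mul_assoc R⁻¹ R O, nonsing_inv_mul _ (isUnit_iff_ne_zero.2 hRdet), one_mul, hO2]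
    have hdetB2 : B.det * B.det = S.det := by
      have h1 : Bᵀ.det * T.det * B.det = 1 := by
        rw [← det_mul, ← det_mul, hBTB, det_one]
      rw [det_transpose] at h1
      have hTS : T.det = S.det⁻¹ := by rw [hTdef, det_nonsing_inv, Ring.inverse_eq_inv']
      rw [hTS] at h1
      field_simp at h1
      linarith [h1]
    have hdetB0 : B.det ≠ 0 := by
      intro h
      rw [h, mul_zero] at hdetB2
      exact hdetS.ne (hdetB2)
    have habsdetB : |B.det| = Real.sqrt S.det := by
      rw [← hdetB2, ← Real.sqrt_mul_self_eq_abs]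
    -- B maps d•e to δ
    set e : Fin L → ℝ := Pi.single i₀ 1 with hedef
    have hBe : B *ᵥ (d • e) = δ := by
      rw [hBdef, ← mulVec_mulVec, mulVec_smul, hOe, hudef, smul_smul,
        mul_inv_cancel₀ hd0.ne', one_smul, hvdef, mulVec_mulVec,
        nonsing_inv_mul _ (isUnit_iff_ne_zero.2 hRdet), one_mulVec]
    -- quadratic identity for B
    have hQB : ∀ z : Fin L → ℝ, (B *ᵥ z) ⬝ᵥ (T *ᵥ (B *ᵥ z)) = z ⬝ᵥ z := by
      intro z
      rw [mulVec_mulVec, dotProduct_mulVec _ (T * B) z]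
      rw [show (B *ᵥ z) ᵥ* (T * B) = z by
        rw [← mulVec_transpose (T * B) (B *ᵥ z), mulVec_mulVec, transpose_mul, hTt, hBTB,
          one_mulVec]]
    -- the integrand
    set f : (Fin L → ℝ) → ℝ := fun x => c * Real.exp (-(x ⬝ᵥ (T *ᵥ x)) / 2) with hfdef
    set g : (Fin L → ℝ) → ℝ := fun y => |f (y - μ₁) - f (y - μ₂)| with hgdef
    have hQcont : Continuous fun x : Fin L → ℝ => x ⬝ᵥ (T *ᵥ x) := by
      simp only [dotProduct, Matrix.mulVec]
      apply continuous_finset_sum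
      intro i _
      exact (continuous_apply i).mul
        (continuous_finset_sum _ fun j _ => continuous_const.mul (continuous_apply j))
    have hfcont : Continuous f := by
      apply continuous_const.mul
      exact Real.continuous_exp.comp ((hQcont.neg).div_const 2)
    have hgcont : Continuous g := by
      apply Continuous.abs
      exact (hfcont.comp (continuous_id.sub continuous_const)).sub
        (hfcont.comp (continuous_id.sub continuous_const))
    -- change of variables
    have hφcont : Continuous (Matrix.toLin' B) := LinearMap.continuous_on_pi _
    have hmap := Real.map_matrix_volume_pi_eq_smul_volume_pi (M := B) hdetB0
    have hcv : ∫ z, g (B *ᵥ z + μ₁) = |B.det|⁻¹ * ∫ y, g y := by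
      have hgm : AEStronglyMeasurable (fun y => g (y + μ₁))
          (Measure.map (Matrix.toLin' B) volume) :=
        (hgcont.comp (continuous_id.add continuous_const)).aestronglyMeasurable
      have h2 : ∫ z, g (B *ᵥ z + μ₁)
          = ∫ y, g (y + μ₁) ∂(Measure.map (Matrix.toLin' B) volume) := by
        rw [integral_map hφcont.measurable.aemeasurable hgm]
        simp_rw [Matrix.toLin'_apply]
      rw [h2, hmap, integral_smul_measure, ENNReal.toReal_ofReal (by positivity),
        integral_add_right_eq_self (fun y => g y) μ₁, abs_inv, smul_eq_mul]
    -- product structure of the transformed integrand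
    set F : Fin L → ℝ → ℝ := fun i t => if i = i₀ then |gphi t - gphi (t + d)| else gphi t
      with hFdef
    have hexp_prod : ∀ z : Fin L → ℝ, Real.exp (-(z ⬝ᵥ z) / 2) = ∏ i, gphi (z i) := by
      intro z
      rw [show (z ⬝ᵥ z) = ∑ i, z i * z i from rfl]
      unfold gphi
      rw [← Real.exp_sum]
      congr 1
      rw [← Finset.sum_div, Finset.sum_neg_distrib, neg_div]
    have hgprod : ∀ z : Fin L → ℝ, g (B *ᵥ z + μ₁) = c * ∏ i, F i (z i) := by
      intro z
      have hy1 : B *ᵥ z + μ₁ - μ₁ = B *ᵥ z := by abel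
      have hy2 : B *ᵥ z + μ₁ - μ₂ = B *ᵥ (z + d • e) := by
        rw [mulVec_add, hBe, hδdef]
        abel
      rw [hgdef]
      simp only [hy1, hy2, hfdef]
      rw [hQB, hQB]
      rw [← mul_sub, abs_mul, abs_of_nonneg hc0]
      congr 1
      rw [hexp_prod, hexp_prod]
      have hw : ∀ i : Fin L, (z + d • e) i = if i = i₀ then z i + d else z i := by
        intro i
        by_cases h : i = i₀ <;>
          simp [h, hedef, Pi.single_apply]
      have hP1 : ∏ i, gphi (z i) = gphi (z i₀) * ∏ i ∈ Finset.univ.erase i₀, gphi (z i) :=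
        (Finset.mul_prod_erase Finset.univ _ (Finset.mem_univ i₀)).symm
      have hP2 : ∏ i, gphi ((z + d • e) i)
          = gphi (z i₀ + d) * ∏ i ∈ Finset.univ.erase i₀, gphi (z i) := by
        rw [← Finset.mul_prod_erase Finset.univ _ (Finset.mem_univ i₀), hw i₀, if_pos rfl]
        congr 1
        refine Finset.prod_congr rfl fun i hi => ?_
        rw [hw i, if_neg (Finset.ne_of_mem_erase hi)]
      have hP3 : ∏ i, F i (z i)
          = |gphi (z i₀) - gphi (z i₀ + d)| * ∏ i ∈ Finset.univ.erase i₀, gphi (z i) := by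
        rw [← Finset.mul_prod_erase Finset.univ _ (Finset.mem_univ i₀), hFdef]
        simp only [if_pos rfl]
        congr 1
        refine Finset.prod_congr rfl fun i hi => ?_
        simp only [if_neg (Finset.ne_of_mem_erase hi)]
      rw [hP1, hP2, hP3, ← sub_mul, abs_mul]
      congr 1
      rw [abs_of_nonneg (Finset.prod_nonneg fun i _ => gphi_nonneg _)]
    -- compute the product integral
    have hgauss : (∫ t : ℝ, gphi t) = Real.sqrt (2 * π) := by
      have h1 := integral_gaussian (1/2)
      have h2 : (fun x : ℝ => Real.exp (-(1/2) * x ^ 2)) = gphi := by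
        funext t; rw [gphi]; ring_nf
      rw [h2] at h1
      rw [h1]
      congr 1
      field_simp
    have hprodint : ∫ z : Fin L → ℝ, ∏ i, F i (z i)
        = (∫ t : ℝ, |gphi t - gphi (t + d)|) * Real.sqrt (2 * π) ^ (L - 1) := by
      rw [MeasureTheory.integral_fintype_prod_volume_eq_prod F,
        ← Finset.mul_prod_erase Finset.univ _ (Finset.mem_univ i₀)]
      have hA : (∫ x : ℝ, F i₀ x) = ∫ t : ℝ, |gphi t - gphi (t + d)| := by
        simp only [hFdef, eq_self_iff_true, if_true]
      have hint : ∀ i ∈ Finset.univ.erase i₀, (∫ t : ℝ, F i t) = Real.sqrt (2 * π) := by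
        intro i hi
        simp only [hFdef, if_neg (Finset.ne_of_mem_erase hi)]
        exact hgauss
      rw [hA, Finset.prod_congr rfl hint, Finset.prod_const,
        Finset.card_erase_of_mem (Finset.mem_univ i₀), Finset.card_univ, Fintype.card_fin]
    -- assemble
    have hmain : (∫ y, g y) = Real.sqrt S.det * (c *
        ((∫ t : ℝ, |gphi t - gphi (t + d)|) * Real.sqrt (2 * π) ^ (L - 1))) := by
      have h1 : ∫ z, g (B *ᵥ z + μ₁) = c *
          ((∫ t : ℝ, |gphi t - gphi (t + d)|) * Real.sqrt (2 * π) ^ (L - 1)) := by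
        rw [show (fun z => g (B *ᵥ z + μ₁)) = fun z => c * ∏ i, F i (z i) from funext hgprod]
        rw [integral_const_mul, hprodint]
      rw [h1] at hcv
      have habs0 : |B.det| ≠ 0 := abs_ne_zero.2 hdetB0
      have h3 : |B.det| * (c * ((∫ t : ℝ, |gphi t - gphi (t + d)|) * Real.sqrt (2 * π) ^ (L - 1)))
          = ∫ y, g y := by
        rw [hcv, ← mul_assoc, mul_inv_cancel₀ habs0, one_mul]
      rw [← habsdetB, ← h3]
    -- final numeric computation
    have hI1 : (∫ t : ℝ, |gphi t - gphi (t + d)|) ≤ 2 * d := oneD_bound d hd0.le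
    have hI1nn : 0 ≤ ∫ t : ℝ, |gphi t - gphi (t + d)| :=
      integral_nonneg fun t => abs_nonneg _
    have h2π : (0:ℝ) < 2 * π := by positivity
    -- constant simplification : sqrt(det) * c = (2π)^(-(L:ℝ)/2)
    have hconst1 : Real.sqrt S.det * c = (2 * π) ^ (-(L : ℝ) / 2) := by
      rw [hcdef, Real.sqrt_eq_rpow, ← mul_assoc, mul_comm (S.det ^ ((1:ℝ)/2)),
        mul_assoc, ← Real.rpow_add hdetS]
      norm_num
    have hconst2 : Real.sqrt (2 * π) ^ (L - 1) = (2 * π) ^ (((L:ℝ) - 1) / 2) := by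
      rw [Real.sqrt_eq_rpow, ← Real.rpow_natCast ((2*π) ^ ((1:ℝ)/2)) (L-1),
        ← Real.rpow_mul h2π.le]
      congr 1
      rw [Nat.cast_sub hL]
      ring
    have hconst3 : (2 * π) ^ (-(L : ℝ) / 2) * (2 * π) ^ (((L:ℝ) - 1) / 2)
        = (2 * π) ^ (-(1:ℝ) / 2) := by
      rw [← Real.rpow_add h2π]
      congr 1
      ring
    have hconst4 : (2 * π) ^ (-(1:ℝ) / 2) * 2 = Real.sqrt (2 / π) := by
      have hs2 : Real.sqrt 2 * Real.sqrt 2 = 2 := Real.mul_self_sqrt (by norm_num)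
      have hsπ : 0 < Real.sqrt π := Real.sqrt_pos.2 pi_pos
      have h1 : (2 * π) ^ (-(1:ℝ) / 2) = (Real.sqrt (2 * π))⁻¹ := by
        rw [show -(1:ℝ)/2 = -(1/2) by ring, Real.rpow_neg h2π.le, Real.sqrt_eq_rpow]
      rw [h1, Real.sqrt_mul (by norm_num : (0:ℝ) ≤ 2) π,
        show (2:ℝ)/π = 2 * π⁻¹ by ring, Real.sqrt_mul (by norm_num : (0:ℝ) ≤ 2) π⁻¹,
        Real.sqrt_inv]
      calc (Real.sqrt 2 * Real.sqrt π)⁻¹ * 2 = (2 / Real.sqrt 2) * (Real.sqrt π)⁻¹ := by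
            rw [mul_inv]; ring
        _ = Real.sqrt 2 * (Real.sqrt π)⁻¹ := by rw [Real.div_sqrt]
    -- conclude
    have hgoal : (∫ y, g y) ≤ Real.sqrt (2 / π) * d := by
      rw [hmain, ← mul_assoc, hconst1, hconst2, mul_comm (∫ t : ℝ, |gphi t - gphi (t + d)|),
        ← mul_assoc, hconst3]
      calc (2 * π) ^ (-(1:ℝ) / 2) * (∫ t : ℝ, |gphi t - gphi (t + d)|)
          ≤ (2 * π) ^ (-(1:ℝ) / 2) * (2 * d) := by
            apply mul_le_mul_of_nonneg_left hI1 (Real.rpow_nonneg h2π.le _)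
        _ = Real.sqrt (2 / π) * d := by rw [← hconst4]; ring
    exact hgoal
end
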